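/- arXiv:1503.00049 — 3 statements merged into one kernel-verified Lean document; each statement's English description precedes it below -/
import Mathlib

section
/- (Interpolation lemma) Let S be a binary string (over the alphabet {0,1}), and let S1 and S2 be two factors of S with |S1| = |S2| = ℓ. Set i = |S1|_1 and j = |S2|_1 and suppose j > i + 1. Then there exists another factor S3 of S with |S3| = ℓ and i < |S3|_1 < j. -/
/-- Discrete IVT: if a ℕ-valued sequence increases by at most 1 per step
on `[a, a+n]`, starts below `t` and ends at or above `t`, it hits `t`. -/
lemma discrete_ivt (f : ℕ → ℕ) (t : ℕ) :
    ∀ n a, (∀ k, a ≤ k → k < a + n → f (k + 1) ≤ f k + 1) →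
      f a < t → t ≤ f (a + n) → ∃ k, a ≤ k ∧ k ≤ a + n ∧ f k = t := by
  intro n
  induction n with
  | zero => intro a _ h1 h2; rw [Nat.add_zero] at h2; omega
  | succ n ih =>
    intro a hstep h1 h2
    rw [← Nat.add_assoc] at h2
    by_cases hc : t ≤ f (a + n)
    · obtain ⟨k, hk1, hk2, hk3⟩ := ih a (fun k hk hk' => hstep k hk (by omega)) h1 hc
      exact ⟨k, hk1, by omega, hk3⟩
    · have hs := hstep (a + n) (by omega) (by omega)
      exact ⟨a + n + 1, by omega, by omega, by omega⟩

/-- Interpolation lemma: if `S1` and `S2` are factors of a binary string `S`,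
both of length `ℓ`, with `|S2|₁ > |S1|₁ + 1`, then there is another factor `S3`
of `S` of length `ℓ` with `|S1|₁ < |S3|₁ < |S2|₁`. -/
theorem interpolation_lemma (S S1 S2 : List Bool) (ℓ : ℕ)
    (h1 : S1 <:+: S) (h2 : S2 <:+: S)
    (hl1 : S1.length = ℓ) (hl2 : S2.length = ℓ)
    (hij : S2.count true > S1.count true + 1) :
    ∃ S3 : List Bool, S3 <:+: S ∧ S3.length = ℓ ∧
      S1.count true < S3.count true ∧ S3.count true < S2.count true := by
  set N := S.length with hN
  -- the sliding window count
  set f : ℕ → ℕ := fun k => ((S.drop k).take ℓ).count true with hf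
  obtain ⟨s1, t1, hst1⟩ := h1
  obtain ⟨s2, t2, hst2⟩ := h2
  have hwin : ∀ (s m t : List Bool), s ++ m ++ t = S → m.length = ℓ →
      f s.length = m.count true ∧ s.length + ℓ ≤ N := by
    intro s m t hst hm
    have hd : S.drop s.length = m ++ t := by
      rw [← hst, List.append_assoc, List.drop_left]
    have ht : (S.drop s.length).take ℓ = m := by
      rw [hd, ← hm, List.take_left]
    constructor
    · simp [hf, ht]
    · have := congrArg List.length hst
      simp at this
      omega
  obtain ⟨hfp, hpN⟩ := hwin s1 S1 t1 hst1 hl1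
  obtain ⟨hfq, hqN⟩ := hwin s2 S2 t2 hst2 hl2
  set p := s1.length with hp
  set q := s2.length with hq
  -- step bound: if k + 1 ≤ N then f k and f (k+1) differ by ≤ 1
  have hstep : ∀ k, k + 1 ≤ N → f (k + 1) ≤ f k + 1 ∧ f k ≤ f (k + 1) + 1 := by
    intro k hk
    have hlen : 0 < (S.drop k).length := by simp; omega
    obtain ⟨hd, tl, hL⟩ := List.exists_cons_of_ne_nil (List.length_pos_iff.mp hlen)
    have hdrop : S.drop (k + 1) = tl := by
      rw [← List.drop_drop, hL]; rfl
    have hfk1 : f (k + 1) = (tl.take ℓ).count true := by simp [hf, hdrop]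
    have hfk : f k = ((hd :: tl).take ℓ).count true := by simp [hf, hL]
    have e1 : ((hd :: tl).take (ℓ + 1)).count true
        = (if hd = true then 1 else 0) + (tl.take ℓ).count true := by
      simp [List.take_succ_cons, List.count_cons]
      split <;> omega
    have e2 : ((hd :: tl).take (ℓ + 1)).count true
        = ((hd :: tl).take ℓ).count true + (((hd :: tl)[ℓ]?).toList).count true := by
      rw [List.take_succ, List.count_append]
    have e3 : (((hd :: tl)[ℓ]?).toList).count true ≤ 1 := by
      cases h : (hd :: tl)[ℓ]? <;> simp [List.count_cons] <;> split <;> omega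
    rw [hfk, hfk1]
    split at e1 <;> omega
  -- a window is a factor
  have hfac : ∀ k, k + ℓ ≤ N → ((S.drop k).take ℓ) <:+: S ∧ ((S.drop k).take ℓ).length = ℓ := by
    intro k hk
    constructor
    · exact (List.take_prefix ℓ (S.drop k)).isInfix.trans (S.drop_suffix k).isInfix
    · simp; omega
  rcases le_total p q with hpq | hpq
  · obtain ⟨k, hk1, hk2, hk3⟩ := discrete_ivt f (S1.count true + 1) (q - p) p
      (fun k hk hk' => (hstep k (by omega)).1) (by omega)
      (by rw [show p + (q - p) = q from by omega]; omega)
    obtain ⟨hi, hl⟩ := hfac k (by omega)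
    have hc : ((S.drop k).take ℓ).count true = S1.count true + 1 := hk3
    exact ⟨(S.drop k).take ℓ, hi, hl, by omega, by omega⟩
  · obtain ⟨k, hk1, hk2, hk3⟩ := discrete_ivt (fun k => f (p + q - k)) (S1.count true + 1)
      (p - q) q
      (fun k hk hk' => by
        have h1 : p + q - (k + 1) + 1 = p + q - k := by omega
        have h2 := (hstep (p + q - (k + 1)) (by omega)).2
        simp only [h1] at h2
        simpa using h2)
      (by simp only [show p + q - q = p from by omega]; omega)
      (by simp only [show p + q - (q + (p - q)) = q from by omega]; omega)
    obtain ⟨hi, hl⟩ := hfac (p + q - k) (by omega)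
    have hc : ((S.drop (p + q - k)).take ℓ).count true = S1.count true + 1 := hk3
    exact ⟨(S.drop (p + q - k)).take ℓ, hi, hl, by omega, by omega⟩
end

section
/- Let A and B be binary strings (over the alphabet {0,1}), each of length n, and let ℓ satisfy 1 ≤ ℓ ≤ n. Then A and B have a common abelian factor of length ℓ if and only if maxOne(B, ℓ) ≥ minOne(A, ℓ) and maxOne(A, ℓ) ≥ minOne(B, ℓ). -/
/-- `A` and `B` have a common abelian factor of length `ℓ`: there exist factors
`u` of `A` and `v` of `B`, both of length `ℓ`, with equal Parikh vectors. -/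
def HasCommonAbelianFactor (A B : List Bool) (ℓ : ℕ) : Prop :=
  ∃ u v : List Bool, u <:+: A ∧ v <:+: B ∧ u.length = ℓ ∧ v.length = ℓ ∧
    ∀ c : Bool, u.count c = v.count c

/-- The set of numbers of 1's of length-`ℓ` factors of the binary string `S`. -/
def factorOnesCounts (S : List Bool) (ℓ : ℕ) : Set ℕ :=
  {k | ∃ w : List Bool, w <:+: S ∧ w.length = ℓ ∧ w.count true = k}

/-- `minOne S ℓ`: the minimum number of 1's over all length-`ℓ` factors of `S`. -/
noncomputable def minOne (S : List Bool) (ℓ : ℕ) : ℕ := sInf (factorOnesCounts S ℓ)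

/-- `maxOne S ℓ`: the maximum number of 1's over all length-`ℓ` factors of `S`. -/
noncomputable def maxOne (S : List Bool) (ℓ : ℕ) : ℕ := sSup (factorOnesCounts S ℓ)


private def winCount (S : List Bool) (ℓ i : ℕ) : ℕ :=
  ((S.drop i).take ℓ).count true

private lemma count_false_add_count_true (l : List Bool) :
    l.count false + l.count true = l.length := by
  induction l with
  | nil => simp
  | cons a t ih => cases a <;> simp [List.count_cons] <;> omega

private lemma winCount_step (S : List Bool) (ℓ : ℕ) (i : ℕ) :
    winCount S ℓ (i+1) ≤ winCount S ℓ i + 1 ∧ winCount S ℓ i ≤ winCount S ℓ (i+1) + 1 := by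
  rcases Nat.eq_zero_or_pos ℓ with h0 | hℓ
  · simp [winCount, h0]
  by_cases h : i < S.length
  · obtain ⟨m, rfl⟩ : ∃ m, ℓ = m + 1 := ⟨ℓ - 1, by omega⟩
    have hdrop : S.drop i = S[i] :: S.drop (i+1) := List.drop_eq_getElem_cons h
    have h1 : winCount S (m+1) i
        = ((S.drop (i+1)).take m).count true + (if S[i] = true then 1 else 0) := by
      show ((S.drop i).take (m+1)).count true = _
      rw [hdrop, List.take_succ_cons, List.count_cons]
      simp [beq_iff_eq]
    have h2 : winCount S (m+1) (i+1)
        = ((S.drop (i+1)).take m).count true + ((S.drop (i+1))[m]?.toList).count true := by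
      simp [winCount, List.take_succ]
    have h3 : ((S.drop (i+1))[m]?.toList).count true ≤ 1 := by
      rcases hx : (S.drop (i+1))[m]? with _ | b
      · simp [hx]
      · cases b <;> simp [hx]
    constructor <;> rw [h1, h2] <;> split <;> omega
  · have : S.drop i = [] := List.drop_eq_nil_of_le (by omega)
    have h2 : S.drop (i+1) = [] := List.drop_eq_nil_of_le (by omega)
    simp [winCount, this, h2]

/-- discrete IVT, increasing indices -/
private lemma ivt_aux (f : ℕ → ℕ)
    (hstep : ∀ i, f (i+1) ≤ f i + 1 ∧ f i ≤ f (i+1) + 1)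
    (a b k : ℕ) (hab : a ≤ b) (h1 : f a ≤ k) (h2 : k ≤ f b) :
    ∃ i, a ≤ i ∧ i ≤ b ∧ f i = k := by
  induction b, hab using Nat.le_induction with
  | base => exact ⟨a, le_rfl, le_rfl, by omega⟩
  | succ b hab ih =>
    by_cases hk : k ≤ f b
    · obtain ⟨i, hi1, hi2, hi3⟩ := ih hk
      exact ⟨i, hi1, by omega, hi3⟩
    · have := (hstep b).1
      exact ⟨b + 1, by omega, le_rfl, by omega⟩

private lemma ivt (f : ℕ → ℕ)
    (hstep : ∀ i, f (i+1) ≤ f i + 1 ∧ f i ≤ f (i+1) + 1)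
    (a b k : ℕ) (h1 : f a ≤ k) (h2 : k ≤ f b) :
    ∃ i, i ≤ max a b ∧ f i = k := by
  rcases le_total a b with hab | hba
  · obtain ⟨i, _, hi2, hi3⟩ := ivt_aux f hstep a b k hab h1 h2
    exact ⟨i, by omega, hi3⟩
  · set g : ℕ → ℕ := fun j => f (a - j) with hg
    have hgstep : ∀ j, g (j+1) ≤ g j + 1 ∧ g j ≤ g (j+1) + 1 := by
      intro j
      by_cases hj : j < a
      · have heq : a - j = (a - (j+1)) + 1 := by omega
        have := hstep (a - (j+1))
        show f (a - (j+1)) ≤ f (a - j) + 1 ∧ f (a - j) ≤ f (a - (j+1)) + 1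
        rw [heq]
        omega
      · have : a - j = a - (j+1) := by omega
        show f (a - (j+1)) ≤ f (a - j) + 1 ∧ f (a - j) ≤ f (a - (j+1)) + 1
        rw [this]
        omega
    obtain ⟨i, _, hi2, hi3⟩ := ivt_aux g hgstep 0 (a - b) k (by omega)
      (by simpa [hg] using h1) (by simpa [hg, Nat.sub_sub_self hba] using h2)
    exact ⟨a - i, by omega, hi3⟩

private lemma mem_factorOnesCounts_iff (S : List Bool) (ℓ k : ℕ) :
    k ∈ factorOnesCounts S ℓ ↔ ∃ i, i + ℓ ≤ S.length ∧ winCount S ℓ i = k := by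
  constructor
  · rintro ⟨w, ⟨s, t, rfl⟩, hlen, hcnt⟩
    refine ⟨s.length, by simp; omega, ?_⟩
    have : (s ++ (w ++ t)).drop s.length = w ++ t := List.drop_left
    simp only [winCount, List.append_assoc, this, ← hlen, List.take_left, hcnt]
  · rintro ⟨i, hi, hcnt⟩
    refine ⟨(S.drop i).take ℓ, ((List.take_prefix _ _).isInfix).trans
      (List.drop_suffix i S).isInfix, ?_, hcnt⟩
    simp [List.length_take, List.length_drop]
    omega

private lemma factorOnesCounts_nonempty (S : List Bool) (ℓ : ℕ) (h : ℓ ≤ S.length) :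
    (factorOnesCounts S ℓ).Nonempty :=
  ⟨winCount S ℓ 0, (mem_factorOnesCounts_iff S ℓ _).2 ⟨0, by omega, rfl⟩⟩

private lemma factorOnesCounts_bddAbove (S : List Bool) (ℓ : ℕ) :
    BddAbove (factorOnesCounts S ℓ) := by
  refine ⟨ℓ, fun k hk => ?_⟩
  obtain ⟨w, _, hlen, hcnt⟩ := hk
  calc k = w.count true := hcnt.symm
    _ ≤ w.length := List.count_le_length
    _ = ℓ := hlen

private lemma mem_of_between (S : List Bool) (ℓ k : ℕ) (h : ℓ ≤ S.length)
    (h1 : minOne S ℓ ≤ k) (h2 : k ≤ maxOne S ℓ) : k ∈ factorOnesCounts S ℓ := by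
  have hne := factorOnesCounts_nonempty S ℓ h
  have hbdd := factorOnesCounts_bddAbove S ℓ
  have hmin : minOne S ℓ ∈ factorOnesCounts S ℓ := Nat.sInf_mem hne
  have hmax : maxOne S ℓ ∈ factorOnesCounts S ℓ := Nat.sSup_mem hne hbdd
  obtain ⟨a, ha, hfa⟩ := (mem_factorOnesCounts_iff S ℓ _).1 hmin
  obtain ⟨b, hb, hfb⟩ := (mem_factorOnesCounts_iff S ℓ _).1 hmax
  obtain ⟨i, hi, hfi⟩ := ivt (winCount S ℓ) (winCount_step S ℓ) a b k
    (by omega) (by omega)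
  exact (mem_factorOnesCounts_iff S ℓ _).2 ⟨i, by omega, hfi⟩

/-- Binary strings `A`, `B` of length `n` have a common abelian factor of length
`ℓ` (with `1 ≤ ℓ ≤ n`) iff `maxOne B ℓ ≥ minOne A ℓ` and `maxOne A ℓ ≥ minOne B ℓ`. -/
theorem hasCommonAbelianFactor_iff_minMax (n ℓ : ℕ) (A B : List Bool)
    (hA : A.length = n) (hB : B.length = n) (hℓ1 : 1 ≤ ℓ) (hℓn : ℓ ≤ n) :
    HasCommonAbelianFactor A B ℓ ↔
      maxOne B ℓ ≥ minOne A ℓ ∧ maxOne A ℓ ≥ minOne B ℓ := by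
  have hAl : ℓ ≤ A.length := by omega
  have hBl : ℓ ≤ B.length := by omega
  have hbA := factorOnesCounts_bddAbove A ℓ
  have hbB := factorOnesCounts_bddAbove B ℓ
  constructor
  · rintro ⟨u, v, hu, hv, hlu, hlv, hc⟩
    have hkA : u.count true ∈ factorOnesCounts A ℓ := ⟨u, hu, hlu, rfl⟩
    have hkB : u.count true ∈ factorOnesCounts B ℓ := ⟨v, hv, hlv, (hc true).symm⟩
    exact ⟨le_trans (Nat.sInf_le hkA) (le_csSup hbB hkB),
      le_trans (Nat.sInf_le hkB) (le_csSup hbA hkA)⟩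
  · rintro ⟨h1, h2⟩
    set k := max (minOne A ℓ) (minOne B ℓ) with hk
    have hmmA : minOne A ℓ ≤ maxOne A ℓ :=
      Nat.sInf_le (Nat.sSup_mem (factorOnesCounts_nonempty A ℓ hAl) hbA)
    have hmmB : minOne B ℓ ≤ maxOne B ℓ :=
      Nat.sInf_le (Nat.sSup_mem (factorOnesCounts_nonempty B ℓ hBl) hbB)
    obtain ⟨u, hu, hlu, hcu⟩ := mem_of_between A ℓ k hAl (le_max_left _ _)
      (by omega)
    obtain ⟨v, hv, hlv, hcv⟩ := mem_of_between B ℓ k hBl (le_max_right _ _)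
      (by omega)
    refine ⟨u, v, hu, hv, hlu, hlv, fun c => ?_⟩
    cases c
    · have h3 := count_false_add_count_true u
      have h4 := count_false_add_count_true v
      omega
    · omega
end

section
/- Let A and B be binary strings (over the alphabet {0,1}), each of length n, and let ℓ satisfy 1 ≤ ℓ ≤ n. For every integer k belonging to both intervals [minOne(A, ℓ), maxOne(A, ℓ)] and [minOne(B, ℓ), maxOne(B, ℓ)], there exist a factor u of A of length ℓ and a factor v of B of length ℓ such that |u|_1 = |v|_1 = k; in particular u and v have equal Parikh vectors and are common abelian factors of A and B of length ℓ. -/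
namespace CAF

/-- discrete IVT, increasing direction -/
lemma ivt_up (f : ℕ → ℕ) (k a b : ℕ) (hab : a ≤ b)
    (hstep : ∀ i, f (i+1) ≤ f i + 1)
    (h1 : f a ≤ k) (h2 : k ≤ f b) : ∃ i, a ≤ i ∧ i ≤ b ∧ f i = k := by
  induction b, hab using Nat.le_induction with
  | base => exact ⟨a, le_refl _, le_refl _, le_antisymm h1 h2⟩
  | succ b hab ih =>
    by_cases hk : k ≤ f b
    · obtain ⟨i, h⟩ := ih hk
      exact ⟨i, h.1, by omega, h.2.2⟩
    · have := hstep b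
      exact ⟨b+1, by omega, le_refl _, by omega⟩

/-- discrete IVT, decreasing direction -/
lemma ivt_down (f : ℕ → ℕ) (k a b : ℕ) (hab : a ≤ b)
    (hstep : ∀ i, f i ≤ f (i+1) + 1)
    (h1 : k ≤ f a) (h2 : f b ≤ k) : ∃ i, a ≤ i ∧ i ≤ b ∧ f i = k := by
  induction b, hab using Nat.le_induction with
  | base => exact ⟨a, le_refl _, le_refl _, le_antisymm h2 h1⟩
  | succ b hab ih =>
    by_cases hk : f b ≤ k
    · obtain ⟨i, h⟩ := ih hk
      exact ⟨i, h.1, by omega, h.2.2⟩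
    · have := hstep b
      exact ⟨b+1, by omega, le_refl _, by omega⟩

/-- the window of length `ℓ` starting at `i` -/
def win (S : List Bool) (ℓ i : ℕ) : List Bool := (S.drop i).take ℓ

/-- prefix count of ones -/
def g (S : List Bool) (i : ℕ) : ℕ := (S.take i).count true

lemma g_sum (S : List Bool) (ℓ i : ℕ) :
    g S (i + ℓ) = g S i + (win S ℓ i).count true := by
  unfold g win
  rw [List.take_add, List.count_append]

lemma g_step (S : List Bool) (i : ℕ) : g S i ≤ g S (i+1) ∧ g S (i+1) ≤ g S i + 1 := by
  unfold g
  rw [List.take_succ, List.count_append]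
  constructor
  · omega
  · have h1 : (S[i]?).toList.count true ≤ (S[i]?).toList.length :=
      List.count_le_length
    have h2 : (S[i]?).toList.length ≤ 1 := by
      cases h : S[i]? <;> simp
    omega

lemma win_step (S : List Bool) (ℓ i : ℕ) :
    (win S ℓ (i+1)).count true ≤ (win S ℓ i).count true + 1 ∧
    (win S ℓ i).count true ≤ (win S ℓ (i+1)).count true + 1 := by
  have h1 := g_sum S ℓ i
  have h2 := g_sum S ℓ (i+1)
  have h3 := g_step S i
  have h4 := g_step S (i + ℓ)
  have he : i + 1 + ℓ = i + ℓ + 1 := by omega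
  rw [he] at h2
  omega

lemma win_infix (S : List Bool) (ℓ i : ℕ) : win S ℓ i <:+: S :=
  ((List.take_prefix ℓ (S.drop i)).isInfix).trans (List.drop_suffix i S).isInfix

lemma win_length {S : List Bool} {n ℓ i : ℕ} (hS : S.length = n) (hℓ : ℓ ≤ n)
    (hi : i ≤ n - ℓ) : (win S ℓ i).length = ℓ := by
  unfold win
  rw [List.length_take, List.length_drop, hS]
  omega

lemma win_mem {S : List Bool} {n ℓ i : ℕ} (hS : S.length = n) (hℓ : ℓ ≤ n)
    (hi : i ≤ n - ℓ) : (win S ℓ i).count true ∈ factorOnesCounts S ℓ :=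
  ⟨win S ℓ i, win_infix S ℓ i, win_length hS hℓ hi, rfl⟩

lemma mem_win {S : List Bool} {n ℓ k : ℕ} (hS : S.length = n)
    (hk : k ∈ factorOnesCounts S ℓ) :
    ∃ i, i ≤ n - ℓ ∧ (win S ℓ i).count true = k := by
  obtain ⟨w, ⟨s, t, hst⟩, hlen, hcnt⟩ := hk
  refine ⟨s.length, ?_, ?_⟩
  · have : s.length + (w.length + t.length) = n := by
      rw [← hS, ← hst]; simp
    omega
  · have hw : win S ℓ s.length = w := by
      unfold win
      rw [← hst, List.append_assoc, List.drop_left, ← hlen, List.take_left]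
    rw [hw, hcnt]

lemma nonempty_counts {S : List Bool} {n ℓ : ℕ} (hS : S.length = n) (hℓ : ℓ ≤ n) :
    (factorOnesCounts S ℓ).Nonempty :=
  ⟨_, win_mem hS hℓ (Nat.zero_le _)⟩

lemma bddAbove_counts (S : List Bool) (ℓ : ℕ) : BddAbove (factorOnesCounts S ℓ) := by
  refine ⟨ℓ, fun k hk => ?_⟩
  obtain ⟨w, _, hlen, hcnt⟩ := hk
  rw [← hcnt, ← hlen]
  exact List.count_le_length

/-- key lemma: the set of counts is an interval -/
lemma exists_factor {S : List Bool} {n ℓ k : ℕ} (hS : S.length = n) (hℓ : ℓ ≤ n)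
    (hk : k ∈ Set.Icc (minOne S ℓ) (maxOne S ℓ)) :
    ∃ u : List Bool, u <:+: S ∧ u.length = ℓ ∧ u.count true = k := by
  have hne := nonempty_counts hS hℓ
  have hmin : minOne S ℓ ∈ factorOnesCounts S ℓ := Nat.sInf_mem hne
  have hmax : maxOne S ℓ ∈ factorOnesCounts S ℓ := Nat.sSup_mem hne (bddAbove_counts S ℓ)
  obtain ⟨a, ha, hfa⟩ := mem_win hS hmin
  obtain ⟨b, hb, hfb⟩ := mem_win hS hmax
  obtain ⟨hk1, hk2⟩ := hk
  rw [← hfa] at hk1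
  rw [← hfb] at hk2
  rcases le_or_gt a b with hab | hab
  · obtain ⟨i, hai, hib, hfi⟩ := ivt_up (fun i => (win S ℓ i).count true) k a b hab
      (fun i => (win_step S ℓ i).1) hk1 hk2
    exact ⟨win S ℓ i, win_infix S ℓ i, win_length hS hℓ (by omega), hfi⟩
  · obtain ⟨i, hbi, hia, hfi⟩ := ivt_down (fun i => (win S ℓ i).count true) k b a hab.le
      (fun i => (win_step S ℓ i).2) hk2 hk1
    exact ⟨win S ℓ i, win_infix S ℓ i, win_length hS hℓ (by omega), hfi⟩

lemma count_false_add (w : List Bool) : w.count false + w.count true = w.length := by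
  induction w with
  | nil => simp
  | cons h t ih => cases h <;> simp [List.count_cons] <;> omega

end CAF

/-- For binary strings `A`, `B` of length `n`, `1 ≤ ℓ ≤ n`, and every integer `k`
lying in both intervals `[minOne A ℓ, maxOne A ℓ]` and `[minOne B ℓ, maxOne B ℓ]`,
there exist a factor `u` of `A` and a factor `v` of `B`, each of length `ℓ`, with
`|u|₁ = |v|₁ = k`; in particular `u` and `v` have equal Parikh vectors, so they are
common abelian factors of `A` and `B` of length `ℓ`. -/
theorem exists_common_factor_with_k_ones (n ℓ k : ℕ) (A B : List Bool)
    (hA : A.length = n) (hB : B.length = n) (hℓ1 : 1 ≤ ℓ) (hℓn : ℓ ≤ n)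
    (hkA : k ∈ Set.Icc (minOne A ℓ) (maxOne A ℓ))
    (hkB : k ∈ Set.Icc (minOne B ℓ) (maxOne B ℓ)) :
    ∃ u v : List Bool, u <:+: A ∧ v <:+: B ∧ u.length = ℓ ∧ v.length = ℓ ∧
      u.count true = k ∧ v.count true = k ∧ ∀ c : Bool, u.count c = v.count c := by
  obtain ⟨u, huA, hul, huc⟩ := CAF.exists_factor hA hℓn hkA
  obtain ⟨v, hvB, hvl, hvc⟩ := CAF.exists_factor hB hℓn hkB
  refine ⟨u, v, huA, hvB, hul, hvl, huc, hvc, fun c => ?_⟩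
  cases c
  · have h1 := CAF.count_false_add u
    have h2 := CAF.count_false_add v
    omega
  · rw [huc, hvc]
end
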